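/- For the quadratic cross cap f(u,v) = (u, uv, (a₂₀u² + 2a₁₁uv + a₀₂v²)/2) with a₀₂ > 0, evaluated at (0,0): |f_u × f_{vv}| / (4|f_u|³[f_u,f_{uv},f_{vv}]²) · ([f_u,f_{uu},f_{vv}]² + 4[f_u,f_{uv},f_{vv}][f_u,f_{uv},f_{uu}]) = a₂₀. -/

import Mathlib

noncomputable section
open Real Filter

/-- Euclidean dot product on ℝ³ (as ℝ × ℝ × ℝ). -/
def dot3 (a b : ℝ × ℝ × ℝ) : ℝ := a.1 * b.1 + a.2.1 * b.2.1 + a.2.2 * b.2.2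

/-- Cross product on ℝ³. -/
def cross3 (a b : ℝ × ℝ × ℝ) : ℝ × ℝ × ℝ :=
  (a.2.1 * b.2.2 - a.2.2 * b.2.1, a.2.2 * b.1 - a.1 * b.2.2, a.1 * b.2.1 - a.2.1 * b.1)

/-- Determinant of three column vectors in ℝ³. -/
def det3 (a b c : ℝ × ℝ × ℝ) : ℝ := dot3 (cross3 a b) c

/-- Euclidean norm on ℝ³. -/
def norm3 (a : ℝ × ℝ × ℝ) : ℝ := Real.sqrt (dot3 a a)

/-- Partial derivative in the first variable. -/
def p1 {E : Type*} [NormedAddCommGroup E] [NormedSpace ℝ E] (f : ℝ → ℝ → E) (u v : ℝ) : E :=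
  deriv (fun t => f t v) u

/-- Partial derivative in the second variable. -/
def p2 {E : Type*} [NormedAddCommGroup E] [NormedSpace ℝ E] (f : ℝ → ℝ → E) (u v : ℝ) : E :=
  deriv (fun t => f u t) v

lemma aux_p1 (a20 a11 a02 : ℝ) (u v : ℝ) :
    p1 (fun u v => ((u, u * v, (a20 * u ^ 2 + 2 * a11 * u * v + a02 * v ^ 2) / 2) : ℝ × ℝ × ℝ)) u v
      = (1, v, a20 * u + a11 * v) := by
  have h3 : HasDerivAt (fun t : ℝ => (a20 * t ^ 2 + 2 * a11 * t * v + a02 * v ^ 2) / 2)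
      (a20 * u + a11 * v) u := by
    have := ((((hasDerivAt_pow 2 u).const_mul a20).add
      (((hasDerivAt_id u).const_mul (2 * a11)).mul_const v)).add_const (a02 * v ^ 2)).div_const 2
    exact this.congr_deriv (by ring)
  have h : HasDerivAt (fun t : ℝ =>
      ((t, t * v, (a20 * t ^ 2 + 2 * a11 * t * v + a02 * v ^ 2) / 2) : ℝ × ℝ × ℝ))
      ((1 : ℝ), v, a20 * u + a11 * v) u := by
    simpa using (hasDerivAt_id u).prodMk (((hasDerivAt_id u).mul_const v).prodMk h3)
  simpa [p1] using h.deriv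

lemma aux_p2 (a20 a11 a02 : ℝ) (u v : ℝ) :
    p2 (fun u v => ((u, u * v, (a20 * u ^ 2 + 2 * a11 * u * v + a02 * v ^ 2) / 2) : ℝ × ℝ × ℝ)) u v
      = (0, u, a11 * u + a02 * v) := by
  have h3 : HasDerivAt (fun s : ℝ => (a20 * u ^ 2 + 2 * a11 * u * s + a02 * s ^ 2) / 2)
      (a11 * u + a02 * v) v := by
    have := ((((hasDerivAt_id v).const_mul (2 * a11 * u)).add
      ((hasDerivAt_pow 2 v).const_mul a02)).const_add (a20 * u ^ 2)).div_const 2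
    exact (this.congr_deriv (g' := a11 * u + a02 * v) (by ring)).congr_of_eventuallyEq
      (Filter.Eventually.of_forall fun s => by simp only [Pi.add_apply, id_eq]; ring)
  have h : HasDerivAt (fun s : ℝ =>
      ((u, u * s, (a20 * u ^ 2 + 2 * a11 * u * s + a02 * s ^ 2) / 2) : ℝ × ℝ × ℝ))
      ((0 : ℝ), u, a11 * u + a02 * v) v := by
    simpa using (hasDerivAt_const v u).prodMk (((hasDerivAt_id v).const_mul u).prodMk h3)
  simpa [p2] using h.deriv

/-- verification of the intrinsic formula for `a₂₀` on the
quadratic cross cap normal form. -/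
theorem stmt_7 (a20 a11 a02 : ℝ) (ha02 : 0 < a02) :
    let f : ℝ → ℝ → ℝ × ℝ × ℝ := fun u v =>
      (u, u * v, (a20 * u ^ 2 + 2 * a11 * u * v + a02 * v ^ 2) / 2)
    let fu := p1 f 0 0
    let fuu := p1 (p1 f) 0 0
    let fuv := p1 (p2 f) 0 0
    let fvv := p2 (p2 f) 0 0
    norm3 (cross3 fu fvv) / (4 * norm3 fu ^ 3 * det3 fu fuv fvv ^ 2) *
        (det3 fu fuu fvv ^ 2 + 4 * det3 fu fuv fvv * det3 fu fuv fuu) = a20 := by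
  intro f fu fuu fuv fvv
  have hfu : fu = (1, 0, 0) := by
    show p1 f 0 0 = _
    rw [aux_p1]; norm_num
  have hfuu : fuu = (0, 0, a20) := by
    show p1 (p1 f) 0 0 = _
    have : p1 f = fun u v => ((1, v, a20 * u + a11 * v) : ℝ × ℝ × ℝ) := by
      funext u v; exact aux_p1 a20 a11 a02 u v
    rw [this]
    unfold p1
    have h : HasDerivAt (fun t : ℝ => ((1, (0:ℝ), a20 * t + a11 * 0) : ℝ × ℝ × ℝ))
        ((0 : ℝ), 0, a20) 0 :=
      (hasDerivAt_const 0 (1:ℝ)).prodMk ((hasDerivAt_const 0 (0:ℝ)).prodMk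
        (by simpa using (((hasDerivAt_id (0:ℝ)).const_mul a20).add_const (a11 * 0))))
    exact h.deriv
  have hfuv : fuv = (0, 1, a11) := by
    show p1 (p2 f) 0 0 = _
    have : p2 f = fun u v => ((0, u, a11 * u + a02 * v) : ℝ × ℝ × ℝ) := by
      funext u v; exact aux_p2 a20 a11 a02 u v
    rw [this]
    unfold p1
    have h : HasDerivAt (fun t : ℝ => (((0:ℝ), t, a11 * t + a02 * 0) : ℝ × ℝ × ℝ))
        ((0 : ℝ), 1, a11) 0 :=
      (hasDerivAt_const 0 (0:ℝ)).prodMk ((hasDerivAt_id 0).prodMk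
        (by simpa using (((hasDerivAt_id (0:ℝ)).const_mul a11).add_const (a02 * 0))))
    exact h.deriv
  have hfvv : fvv = (0, 0, a02) := by
    show p2 (p2 f) 0 0 = _
    have : p2 f = fun u v => ((0, u, a11 * u + a02 * v) : ℝ × ℝ × ℝ) := by
      funext u v; exact aux_p2 a20 a11 a02 u v
    rw [this]
    unfold p2
    have h : HasDerivAt (fun s : ℝ => (((0:ℝ), (0:ℝ), a11 * 0 + a02 * s) : ℝ × ℝ × ℝ))
        ((0 : ℝ), 0, a02) 0 :=
      (hasDerivAt_const 0 (0:ℝ)).prodMk ((hasDerivAt_const 0 (0:ℝ)).prodMk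
        (by simpa using (((hasDerivAt_id (0:ℝ)).const_mul a02).const_add (a11 * 0))))
    exact h.deriv
  rw [hfu, hfuu, hfuv, hfvv]
  simp only [norm3, cross3, det3, dot3]
  norm_num
  rw [show a02 * a02 = a02 ^ 2 by ring, Real.sqrt_sq ha02.le]
  field_simp
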